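/- Let n ≥ 4 be even, s = s_n, a_{n+1} = (20s^2 - 295s + 113)/36, a_n = (20s^2 - 55s + 17)/36, and x = -1 + a_n + a_{n+1}. Then gcd(a_{n+1}, x) = 1 and gcd(a_n, x) = 1 and gcd(a_n, s - 1) = 1. -/

import Mathlib

def sylvester : ℕ → ℕ
  | 0 => 2
  | n + 1 => sylvester n * (sylvester n - 1) + 1

lemma sylvester_step_7 (s : ℕ) (h : s % 72 = 7) : (s * (s - 1) + 1) % 72 = 43 := by
  obtain ⟨q, rfl⟩ : ∃ q, s = 72 * q + 7 := ⟨s / 72, by omega⟩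
  have h1 : 72 * q + 7 - 1 = 72 * q + 6 := by omega
  rw [h1]
  have h2 : (72 * q + 7) * (72 * q + 6) + 1 = 43 + 72 * (72 * q * q + 13 * q) := by ring
  rw [h2, Nat.add_mul_mod_self_left]

lemma sylvester_step_43 (s : ℕ) (h : s % 72 = 43) : (s * (s - 1) + 1) % 72 = 7 := by
  obtain ⟨q, rfl⟩ : ∃ q, s = 72 * q + 43 := ⟨s / 72, by omega⟩
  have h1 : 72 * q + 43 - 1 = 72 * q + 42 := by omega
  rw [h1]
  have h2 : (72 * q + 43) * (72 * q + 42) + 1 = 7 + 72 * (72 * q * q + 85 * q + 25) := by ring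
  rw [h2, Nat.add_mul_mod_self_left]

lemma sylvester_mod72 : ∀ m, sylvester (2 * m + 2) % 72 = 7 := by
  intro m
  induction m with
  | zero => rfl
  | succ k ih =>
    have e : 2 * (k + 1) + 2 = (2 * k + 2) + 1 + 1 := by ring
    rw [e]
    show (sylvester ((2 * k + 2) + 1) * (sylvester ((2 * k + 2) + 1) - 1) + 1) % 72 = 7
    apply sylvester_step_43
    show (sylvester (2 * k + 2) * (sylvester (2 * k + 2) - 1) + 1) % 72 = 43
    exact sylvester_step_7 _ ih

theorem bottom_weight_fano_wellformed (n : ℕ) (hn : 4 ≤ n) (hne : Even n) (A B : ℤ)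
    (hA : 36 * A = 20 * (sylvester n : ℤ) ^ 2 - 295 * (sylvester n : ℤ) + 113)
    (hB : 36 * B = 20 * (sylvester n : ℤ) ^ 2 - 55 * (sylvester n : ℤ) + 17) :
    Int.gcd A (-1 + B + A) = 1 ∧ Int.gcd B (-1 + B + A) = 1 ∧
      Int.gcd B ((sylvester n : ℤ) - 1) = 1 := by
  obtain ⟨m, hm⟩ : ∃ m, n = 2 * m + 2 := by
    obtain ⟨r, hr⟩ := hne; exact ⟨r - 1, by omega⟩
  have hmod : sylvester n % 72 = 7 := by rw [hm]; exact sylvester_mod72 m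
  obtain ⟨q, hq⟩ : ∃ q : ℕ, sylvester n = 72 * q + 7 := ⟨sylvester n / 72, by omega⟩
  have hs : (sylvester n : ℤ) = 72 * (q : ℤ) + 7 := by rw [hq]; push_cast; ring
  set k : ℤ := (q : ℤ)
  have hA' : A = 2880 * k ^ 2 - 30 * k - 27 := by
    have : 36 * A = 36 * (2880 * k ^ 2 - 30 * k - 27) := by rw [hA, hs]; ring
    linarith
  have hB' : B = 2880 * k ^ 2 + 450 * k + 17 := by
    have : 36 * B = 36 * (2880 * k ^ 2 + 450 * k + 17) := by rw [hB, hs]; ring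
    linarith
  refine ⟨?_, ?_, ?_⟩
  · rw [← Int.isCoprime_iff_gcd_eq_one]
    exact ⟨345345442 - 13185916880 * k - 180835431360 * k ^ 2,
      -847666085 - 941851200 * k + 90417715680 * k ^ 2, by rw [hA', hB']; ring⟩
  · rw [← Int.isCoprime_iff_gcd_eq_one]
    exact ⟨2 - 96 * k, 3 + 48 * k, by rw [hA', hB']; ring⟩
  · rw [← Int.isCoprime_iff_gcd_eq_one]
    exact ⟨12 * k - 1, -480 * k ^ 2 + 5 * k + 3, by rw [hB', hs]; ring⟩
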